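/- There is a constant C2 > 0 depending only on d such that for every g ∈ SL_d(ℝ) there exists h ∈ SL_d(ℝ) with h ≠ I_d, h·(gℤ^d) = gℤ^d (equality of subsets of ℝ^d), and ‖h − I_d‖_op ≤ C2 · δ(g)^{d/(d−1)}. (This expresses the upper bound r_0(x) ≤ C2 δ(x)^{d/(d−1)} for the injectivity radius of the point x = g·SL_d(ℤ) in SL_d(ℝ)/SL_d(ℤ).) -/

import Mathlib

open Matrix

/-- The Euclidean norm on `ℝ^d`. -/
noncomputable def euclNorm {d : ℕ} (x : Fin d → ℝ) : ℝ :=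
  Real.sqrt (∑ i, x i ^ 2)

/-- `δ(g) = inf {‖g v‖ : v ∈ ℤ^d, v ≠ 0}` (Euclidean norm). -/
noncomputable def deltaMin {d : ℕ} (g : Matrix (Fin d) (Fin d) ℝ) : ℝ :=
  sInf {r | ∃ v : Fin d → ℤ, v ≠ 0 ∧ r = euclNorm (g.mulVec (fun i => (v i : ℝ)))}

/-- The operator norm of a matrix with respect to the Euclidean norm on `ℝ^d`. -/
noncomputable def opNorm {d : ℕ} (M : Matrix (Fin d) (Fin d) ℝ) : ℝ :=
  sSup ((fun x => euclNorm (M.mulVec x)) '' {x : Fin d → ℝ | euclNorm x ≤ 1})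

/-- The lattice `gℤ^d = {g v : v ∈ ℤ^d} ⊆ ℝ^d`. -/
def latticeOf {d : ℕ} (g : Matrix (Fin d) (Fin d) ℝ) : Set (Fin d → ℝ) :=
  {x | ∃ v : Fin d → ℤ, x = g.mulVec (fun i => (v i : ℝ))}


open MeasureTheory Submodule Set

lemma euclNorm_nonneg {d : ℕ} (x : Fin d → ℝ) : 0 ≤ euclNorm x := Real.sqrt_nonneg _

lemma euclNorm_eq_norm {d : ℕ} (x : Fin d → ℝ) :
    euclNorm x = ‖(WithLp.equiv 2 (Fin d → ℝ)).symm x‖ := by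
  rw [EuclideanSpace.norm_eq]
  simp [euclNorm, sq_abs]

lemma sq_euclNorm {d : ℕ} (x : Fin d → ℝ) : euclNorm x ^ 2 = ∑ i, x i ^ 2 :=
  Real.sq_sqrt (Finset.sum_nonneg fun i _ => sq_nonneg _)

lemma euclNorm_smul {d : ℕ} (c : ℝ) (x : Fin d → ℝ) :
    euclNorm (c • x) = |c| * euclNorm x := by
  simp only [euclNorm, Pi.smul_apply, smul_eq_mul, mul_pow, ← Finset.mul_sum]
  rw [Real.sqrt_mul (sq_nonneg c), Real.sqrt_sq_eq_abs]

lemma dot_le_euclNorm {d : ℕ} (x y : Fin d → ℝ) :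
    |x ⬝ᵥ y| ≤ euclNorm x * euclNorm y := by
  have h := Finset.sum_mul_sq_le_sq_mul_sq Finset.univ x y
  have hnn : 0 ≤ euclNorm x * euclNorm y := mul_nonneg (euclNorm_nonneg _) (euclNorm_nonneg _)
  have h2 : |x ⬝ᵥ y| ^ 2 ≤ (euclNorm x * euclNorm y) ^ 2 := by
    rw [sq_abs, mul_pow, sq_euclNorm, sq_euclNorm]; exact h
  calc |x ⬝ᵥ y| = Real.sqrt (|x ⬝ᵥ y| ^ 2) := (Real.sqrt_sq (abs_nonneg _)).symm
    _ ≤ Real.sqrt ((euclNorm x * euclNorm y) ^ 2) := Real.sqrt_le_sqrt h2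
    _ = euclNorm x * euclNorm y := Real.sqrt_sq hnn

noncomputable def frobNorm {d : ℕ} (M : Matrix (Fin d) (Fin d) ℝ) : ℝ :=
  Real.sqrt (∑ i, ∑ j, M i j ^ 2)

lemma frobNorm_nonneg {d : ℕ} (M : Matrix (Fin d) (Fin d) ℝ) : 0 ≤ frobNorm M :=
  Real.sqrt_nonneg _

lemma euclNorm_mulVec_le {d : ℕ} (M : Matrix (Fin d) (Fin d) ℝ) (x : Fin d → ℝ) :
    euclNorm (M.mulVec x) ≤ frobNorm M * euclNorm x := by
  have hnn : 0 ≤ frobNorm M * euclNorm x := mul_nonneg (frobNorm_nonneg _) (euclNorm_nonneg _)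
  have h2 : euclNorm (M.mulVec x) ^ 2 ≤ (frobNorm M * euclNorm x) ^ 2 := by
    rw [mul_pow, sq_euclNorm, sq_euclNorm, frobNorm,
      Real.sq_sqrt (Finset.sum_nonneg fun i _ => Finset.sum_nonneg fun j _ => sq_nonneg (M i j)),
      Finset.sum_mul]
    refine Finset.sum_le_sum fun i _ => ?_
    exact Finset.sum_mul_sq_le_sq_mul_sq Finset.univ (M i) x
  calc euclNorm (M.mulVec x) = Real.sqrt (euclNorm (M.mulVec x) ^ 2) :=
        (Real.sqrt_sq (euclNorm_nonneg _)).symm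
    _ ≤ Real.sqrt ((frobNorm M * euclNorm x) ^ 2) := Real.sqrt_le_sqrt h2
    _ = _ := Real.sqrt_sq hnn

lemma one_le_euclNorm_int {d : ℕ} {v : Fin d → ℤ} (hv : v ≠ 0) :
    1 ≤ euclNorm (fun i => (v i : ℝ)) := by
  obtain ⟨i, hi⟩ := Function.ne_iff.mp hv
  have h1 : (1 : ℝ) ≤ ((v i : ℝ)) ^ 2 := by
    have : 1 ≤ |v i| := Int.one_le_abs hi
    have : (1:ℝ) ≤ |(v i : ℝ)| := by exact_mod_cast (by push_cast [Int.cast_abs] at *; exact_mod_cast this)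
    nlinarith [abs_nonneg (v i : ℝ), sq_abs (v i : ℝ)]
  have : (1:ℝ) ≤ ∑ j, ((v j : ℝ)) ^ 2 :=
    h1.trans (Finset.single_le_sum (f := fun j => ((v j : ℝ))^2) (fun j _ => sq_nonneg _) (Finset.mem_univ i))
  calc (1:ℝ) = Real.sqrt 1 := Real.sqrt_one.symm
    _ ≤ _ := Real.sqrt_le_sqrt this


lemma vecMulVec_mulVec' {d : ℕ} (w z x : Fin d → ℝ) :
    (vecMulVec w z).mulVec x = (z ⬝ᵥ x) • w := by
  ext i
  simp only [vecMulVec_apply, mulVec, dotProduct, Pi.smul_apply, smul_eq_mul, Finset.sum_mul]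
  exact Finset.sum_congr rfl fun j _ => by ring

lemma mul_vecMulVec' {d : ℕ} (M : Matrix (Fin d) (Fin d) ℝ) (a b : Fin d → ℝ) :
    M * vecMulVec a b = vecMulVec (M.mulVec a) b := by
  ext i j
  simp only [mul_apply, vecMulVec_apply, mulVec, dotProduct, Finset.sum_mul]
  exact Finset.sum_congr rfl fun k _ => by ring

lemma smul_vecMulVec' {d : ℕ} (c : ℝ) (a b : Fin d → ℝ) :
    c • vecMulVec a b = vecMulVec (c • a) b := by
  ext i j
  simp [vecMulVec_apply, mul_assoc]

lemma det_one_add_vecMulVec' {d : ℕ} (a b : Fin d → ℝ) :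
    (1 + vecMulVec a b).det = 1 + b ⬝ᵥ a := by
  rw [vecMulVec_eq Unit, Matrix.det_one_add_replicateCol_mul_replicateRow]

/-- Minkowski: nonzero integer point with `‖A u‖ ≤ r`. -/
lemma mink {d : ℕ} (A : Matrix (Fin d) (Fin d) ℝ) (hA : A.det ≠ 0)
    {r : ℝ} (hr : 0 < r)
    (hvol : ENNReal.ofReal |A.det| * 2 ^ d <
      ENNReal.ofReal (r ^ d) * volume (Metric.ball (0 : EuclideanSpace ℝ (Fin d)) 1)) :
    ∃ u : Fin d → ℤ, u ≠ 0 ∧ euclNorm (A.mulVec (fun i => (u i : ℝ))) ≤ r := by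
  classical
  have : Invertible A := A.invertibleOfIsUnitDet (isUnit_iff_ne_zero.mpr hA)
  set b : Module.Basis (Fin d) ℝ (Fin d → ℝ) :=
    (Pi.basisFun ℝ (Fin d)).map (A.toLinearEquiv' this) with hb
  have hbi : ∀ i, b i = A.mulVec (Pi.single i 1) := by
    intro i; simp [hb, Matrix.toLinearEquiv', Matrix.toLin'_apply]
  -- the set
  set s : Set (Fin d → ℝ) := {x | euclNorm x ≤ r} with hs
  have hs_eq : s = (⇑(WithLp.equiv 2 (Fin d → ℝ)).symm) ⁻¹' Metric.closedBall 0 r := by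
    ext x
    simp [hs, euclNorm_eq_norm, Metric.mem_closedBall, dist_eq_norm]
  have h_symm : ∀ x ∈ s, -x ∈ s := by
    intro x hx
    rw [hs_eq] at hx ⊢
    simpa using hx
  have h_conv : Convex ℝ s := by
    rw [hs_eq]
    exact (convex_closedBall (0 : EuclideanSpace ℝ (Fin d)) r).linear_preimage
      (WithLp.linearEquiv 2 ℝ (Fin d → ℝ)).symm.toLinearMap
  -- volume of s
  have hvols : volume s = ENNReal.ofReal (r ^ d) *
      volume (Metric.ball (0 : EuclideanSpace ℝ (Fin d)) 1) := by
    have mp := (EuclideanSpace.volume_preserving_symm_measurableEquiv_toLp (Fin d)).symm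
    have : volume s = volume (Metric.closedBall (0 : EuclideanSpace ℝ (Fin d)) r) := by
      rw [hs_eq]
      rw [← mp.measure_preimage measurableSet_closedBall.nullMeasurableSet]
      rfl
    rw [this, Measure.addHaar_closedBall _ _ hr.le, finrank_euclideanSpace_fin]
  -- fundamental domain volume
  have hF : volume (ZSpan.fundamentalDomain b) = ENNReal.ofReal |A.det| := by
    rw [ZSpan.volume_fundamentalDomain]
    congr 1
    have : (Matrix.of ⇑b) = Aᵀ := by
      ext i j
      simp [hbi i, Matrix.mulVec_single]
    rw [this, Matrix.det_transpose]
  have fund := ZSpan.isAddFundamentalDomain' b (volume : Measure (Fin d → ℝ))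
  have hcnt : Countable (span ℤ (Set.range ⇑b)).toAddSubgroup := by
    change Countable (span ℤ (Set.range ⇑b))
    infer_instance
  obtain ⟨x, hx0, hxs⟩ := exists_ne_zero_mem_lattice_of_measure_mul_two_pow_lt_measure
    fund h_symm h_conv (by
      rw [hF, hvols, Module.finrank_fin_fun]
      exact hvol)
  -- extract integer coordinates
  obtain ⟨c, hc⟩ := (mem_span_range_iff_exists_fun ℤ).mp x.2
  refine ⟨c, ?_, ?_⟩
  · rintro rfl
    apply hx0
    have : ((x : Fin d → ℝ)) = 0 := by
      rw [← hc]; simp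
    exact Subtype.ext this
  · have key : A.mulVec (fun i => (c i : ℝ)) = (x : Fin d → ℝ) := by
      rw [← hc]
      ext j
      simp [Finset.sum_apply, Pi.smul_apply, hbi, Matrix.mulVec_single, mulVec, dotProduct,
        mul_comm]
    rw [key]
    exact hxs

set_option maxHeartbeats 1000000 in
/-- Upper bound for the injectivity radius: there is `C₂ > 0` depending only on `d`
such that for every `g ∈ SL_d(ℝ)` there exists `h ∈ SL_d(ℝ)`, `h ≠ I_d`, stabilizing
the lattice `gℤ^d`, with `‖h − I_d‖_op ≤ C₂ δ(g)^{d/(d−1)}`. -/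
theorem injectivity_radius_upper_bound (d : ℕ) (hd : 2 ≤ d) :
    ∃ C2 : ℝ, 0 < C2 ∧
      ∀ g : Matrix (Fin d) (Fin d) ℝ, g.det = 1 →
        ∃ h : Matrix (Fin d) (Fin d) ℝ, h.det = 1 ∧ h ≠ 1 ∧
          (fun x => h.mulVec x) '' latticeOf g = latticeOf g ∧
          opNorm (h - 1) ≤ C2 * (deltaMin g) ^ ((d : ℝ) / ((d : ℝ) - 1)) := by
  classical
  have hd0 : 0 < d := by omega
  have hdR : (2 : ℝ) ≤ (d : ℝ) := by exact_mod_cast hd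
  have hd1 : (0 : ℝ) < (d : ℝ) - 1 := by linarith
  -- volume constant
  set ω : ENNReal := volume (Metric.ball (0 : EuclideanSpace ℝ (Fin d)) 1) with hω
  have hωpos : 0 < ω := Metric.measure_ball_pos volume 0 one_pos
  have hωtop : ω ≠ ⊤ := measure_ball_lt_top.ne
  set ωR : ℝ := ω.toReal with hωR
  have hωRpos : 0 < ωR := ENNReal.toReal_pos hωpos.ne' hωtop
  set q : ℝ := 1 / ((d : ℝ) - 1) with hq
  set p : ℝ := (d : ℝ) / ((d : ℝ) - 1) with hp
  have hq0 : 0 < q := by positivity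
  have hqp : q + 1 = p := by rw [hq, hp]; field_simp; ring
  have hqd : q * (d : ℝ) = p := by rw [hq, hp]; field_simp
  have hp0 : 0 < p := by positivity
  have hp2 : p ≤ 2 := by
    rw [hp, div_le_iff₀ hd1]; linarith
  set X : ℝ := 2 ^ (d + 2) / ωR with hX
  have hXpos : 0 < X := by positivity
  set K : ℝ := X ^ q with hK
  have hKpos : 0 < K := Real.rpow_pos_of_pos hXpos _
  have hKd1 : K ^ (d - 1) = X := by
    rw [hK, ← Real.rpow_natCast (X ^ q) (d - 1), ← Real.rpow_mul hXpos.le]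
    have : q * ((d : ℕ) - 1 : ℕ) = 1 := by
      rw [hq]
      rw [Nat.cast_sub (by omega : 1 ≤ d)]
      push_cast
      field_simp
    rw [this, Real.rpow_one]
  have hKd : K ^ d = X * K := by
    have : d = (d - 1) + 1 := by omega
    rw [this, pow_succ, hKd1]
  refine ⟨4 * K, by positivity, ?_⟩
  intro g hdet
  have hdet' : g.det ≠ 0 := by rw [hdet]; exact one_ne_zero
  have hunit : IsUnit g.det := by rw [hdet]; exact isUnit_one
  have hggi : g * g⁻¹ = 1 := Matrix.mul_nonsing_inv g hunit
  have higg : g⁻¹ * g = 1 := Matrix.nonsing_inv_mul g hunit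
  -- the set S and positivity of delta
  set S : Set ℝ := {r | ∃ v : Fin d → ℤ, v ≠ 0 ∧ r = euclNorm (g.mulVec (fun i => (v i : ℝ)))}
    with hS
  have hSne : S.Nonempty := by
    refine ⟨_, Pi.single (⟨0, hd0⟩ : Fin d) 1, ?_, rfl⟩
    intro h0
    have := congrFun h0 ⟨0, hd0⟩
    simp at this
  have hSlb : ∀ r ∈ S, 1 / frobNorm g⁻¹ ≤ r := by
    rintro r ⟨v, hv, rfl⟩
    have h1 : 1 ≤ euclNorm (fun i => (v i : ℝ)) := one_le_euclNorm_int hv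
    have h2 : euclNorm (fun i => (v i : ℝ)) ≤
        frobNorm g⁻¹ * euclNorm (g.mulVec (fun i => (v i : ℝ))) := by
      have := euclNorm_mulVec_le g⁻¹ (g.mulVec (fun i => (v i : ℝ)))
      rwa [Matrix.mulVec_mulVec, higg, Matrix.one_mulVec] at this
    have hF : 0 < frobNorm g⁻¹ := by
      by_contra hF
      push_neg at hF
      nlinarith [euclNorm_nonneg (g.mulVec (fun i => (v i : ℝ)))]
    rw [div_le_iff₀ hF]
    nlinarith
  have hFpos : 0 < frobNorm g⁻¹ := by
    obtain ⟨r, hr⟩ := hSne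
    by_contra hF
    push_neg at hF
    obtain ⟨v, hv, rfl⟩ := hr
    have h1 : 1 ≤ euclNorm (fun i => (v i : ℝ)) := one_le_euclNorm_int hv
    have h2 := euclNorm_mulVec_le g⁻¹ (g.mulVec (fun i => (v i : ℝ)))
    rw [Matrix.mulVec_mulVec, higg, Matrix.one_mulVec] at h2
    nlinarith [euclNorm_nonneg (g.mulVec (fun i => (v i : ℝ)))]
  set δ : ℝ := deltaMin g with hδdef
  have hδS : δ = sInf S := rfl
  have hδpos : 0 < δ := by
    have : 1 / frobNorm g⁻¹ ≤ δ := by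
      rw [hδS]; exact le_csInf hSne hSlb
    have : 0 < 1 / frobNorm g⁻¹ := by positivity
    linarith [le_csInf hSne hSlb]
  -- choose a near-shortest vector
  obtain ⟨rv, hrvS, hrvlt⟩ : ∃ rv ∈ S, rv < 2 * δ := by
    apply exists_lt_of_csInf_lt hSne
    rw [← hδS]; linarith
  obtain ⟨v, hv0, rfl⟩ := hrvS
  set vR : Fin d → ℝ := fun i => (v i : ℝ) with hvR
  set w : Fin d → ℝ := g.mulVec vR with hw
  set δv : ℝ := euclNorm w with hδv
  have hδvS : δv ∈ S := ⟨v, hv0, rfl⟩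
  have hδvpos : 0 < δv := by
    have : 1 / frobNorm g⁻¹ ≤ δv := hSlb _ hδvS
    have : 0 < 1 / frobNorm g⁻¹ := by positivity
    linarith [hSlb _ hδvS]
  have hδvlt : δv < 2 * δ := hrvlt
  have hww : w ⬝ᵥ w = δv ^ 2 := by
    rw [hδv, sq_euclNorm]
    simp [dotProduct, sq]
  -- parameters
  set r : ℝ := K * δv ^ q with hr
  have hrpos : 0 < r := by positivity
  set t : ℝ := 2 * r * δv with ht
  have htpos : 0 < t := by positivity
  have hδvq : δv ^ q * δv = δv ^ p := by
    nth_rewrite 2 [← Real.rpow_one δv]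
    rw [← Real.rpow_add hδvpos, hqp]
  have hδvqd : (δv ^ q) ^ d = δv ^ p := by
    rw [← Real.rpow_natCast (δv ^ q) d, ← Real.rpow_mul hδvpos.le, hqd]
  -- the auxiliary matrix B
  set c : ℝ := (t - 1) / δv ^ 2 with hc
  set B : Matrix (Fin d) (Fin d) ℝ := (g⁻¹)ᵀ + c • vecMulVec w vR with hB
  have hBfact : B = (g⁻¹)ᵀ * (1 + vecMulVec (c • (gᵀ.mulVec w)) vR) := by
    rw [Matrix.mul_add, Matrix.mul_one, mul_vecMulVec', Matrix.mulVec_smul,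
      Matrix.mulVec_mulVec, ← Matrix.transpose_mul, hggi, Matrix.transpose_one,
      Matrix.one_mulVec, ← smul_vecMulVec', hB]
  have hdetB : B.det = t := by
    rw [hBfact, Matrix.det_mul, Matrix.det_transpose, Matrix.det_nonsing_inv, hdet, Ring.inverse_one,
      one_mul, det_one_add_vecMulVec']
    have h1 : vR ⬝ᵥ (c • gᵀ.mulVec w) = c * (w ⬝ᵥ w) := by
      rw [dotProduct_smul]
      congr 1
      rw [Matrix.dotProduct_mulVec, Matrix.vecMul_transpose, ← hw]
    rw [h1, hww, hc]
    field_simp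
    ring
  have hdetB0 : B.det ≠ 0 := by rw [hdetB]; exact htpos.ne'
  -- Minkowski hypothesis
  have hreal : t * 2 ^ d < r ^ d * ωR := by
    have e1 : t * 2 ^ d = 2 ^ (d + 1) * (K * δv ^ p) := by
      rw [ht, hr, ← hδvq]; ring
    have e2 : r ^ d * ωR = 2 ^ (d + 2) * (K * δv ^ p) := by
      rw [hr, mul_pow, hδvqd, hKd, hX]
      field_simp
    rw [e1, e2]
    have : (2 : ℝ) ^ (d + 1) < 2 ^ (d + 2) := by
      apply pow_lt_pow_right₀ one_lt_two (by omega)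
    have hpos : 0 < K * δv ^ p := by positivity
    exact mul_lt_mul_of_pos_right this hpos
  have hvol : ENNReal.ofReal |B.det| * 2 ^ d <
      ENNReal.ofReal (r ^ d) * volume (Metric.ball (0 : EuclideanSpace ℝ (Fin d)) 1) := by
    rw [hdetB, abs_of_pos htpos, ← hω]
    have hω' : ω = ENNReal.ofReal ωR := (ENNReal.ofReal_toReal hωtop).symm
    rw [hω']
    have e1 : ENNReal.ofReal t * 2 ^ d = ENNReal.ofReal (t * 2 ^ d) := by
      rw [ENNReal.ofReal_mul htpos.le]
      congr 1
      rw [ENNReal.ofReal_pow (by norm_num : (0:ℝ) ≤ 2)]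
      norm_num
    have e2 : ENNReal.ofReal (r ^ d) * ENNReal.ofReal ωR = ENNReal.ofReal (r ^ d * ωR) :=
      (ENNReal.ofReal_mul (by positivity)).symm
    rw [e1, e2]
    exact (ENNReal.ofReal_lt_ofReal_iff (by positivity)).mpr hreal
  obtain ⟨u, hu0, hu⟩ := mink B hdetB0 hrpos hvol
  set uR : Fin d → ℝ := fun i => (u i : ℝ) with huR
  -- orthogonality
  set k : ℤ := u ⬝ᵥ v with hk
  have hkR : (k : ℝ) = uR ⬝ᵥ vR := by
    rw [hk]
    push_cast [dotProduct]
    rfl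
  have hBu : B.mulVec uR = (g⁻¹)ᵀ.mulVec uR + (c * (vR ⬝ᵥ uR)) • w := by
    rw [hB, Matrix.add_mulVec, Matrix.smul_mulVec, vecMulVec_mulVec', smul_smul]
  have hgiw : g⁻¹.mulVec w = vR := by
    rw [hw, Matrix.mulVec_mulVec, higg, Matrix.one_mulVec]
  have hgit : ∀ x : Fin d → ℝ, ((g⁻¹)ᵀ.mulVec x) ⬝ᵥ w = x ⬝ᵥ vR := by
    intro x
    rw [← hgiw, Matrix.dotProduct_mulVec, Matrix.mulVec_transpose,
      Matrix.vecMul_vecMul, higg, Matrix.vecMul_one, hgiw]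
  have hdotw : (B.mulVec uR) ⬝ᵥ w = t * (vR ⬝ᵥ uR) := by
    rw [hBu, add_dotProduct, smul_dotProduct, hgit uR, hww, smul_eq_mul]
    have : uR ⬝ᵥ vR = vR ⬝ᵥ uR := dotProduct_comm _ _
    rw [this, hc]
    field_simp
    ring
  have hk0 : k = 0 := by
    have h1 : |(B.mulVec uR) ⬝ᵥ w| ≤ r * δv := by
      calc |(B.mulVec uR) ⬝ᵥ w| ≤ euclNorm (B.mulVec uR) * euclNorm w := dot_le_euclNorm _ _
        _ ≤ r * δv := by
            apply mul_le_mul hu (le_refl _) (euclNorm_nonneg _) hrpos.le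
    rw [hdotw, abs_mul, abs_of_pos htpos] at h1
    have h2 : t * |vR ⬝ᵥ uR| < t := by
      calc t * |vR ⬝ᵥ uR| ≤ r * δv := h1
        _ < t := by rw [ht]; nlinarith
    have h3 : |vR ⬝ᵥ uR| < 1 := by
      by_contra hcon
      push_neg at hcon
      nlinarith
    have h4 : |(k : ℝ)| < 1 := by
      rw [hkR, dotProduct_comm uR vR]
      exact h3
    have h5 : |k| < 1 := by exact_mod_cast h4
    have h6 := abs_lt.mp h5
    omega
  have hvu0 : vR ⬝ᵥ uR = 0 := by
    have := hkR
    rw [hk0] at this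
    rw [dotProduct_comm]
    simpa using this.symm
  -- the short dual vector
  set z : Fin d → ℝ := (g⁻¹)ᵀ.mulVec uR with hz
  have hzr : euclNorm z ≤ r := by
    have : B.mulVec uR = z := by rw [hBu, hvu0]; simp
    rwa [this] at hu
  have huRz : uR = gᵀ.mulVec z := by
    rw [hz, Matrix.mulVec_mulVec, ← Matrix.transpose_mul, higg, Matrix.transpose_one,
      Matrix.one_mulVec]
  have hz0 : z ≠ 0 := by
    intro hzz
    apply hu0
    have h7 : uR = 0 := by rw [huRz, hzz, Matrix.mulVec_zero]
    funext i
    have h8 : (u i : ℝ) = 0 := congrFun h7 i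
    exact_mod_cast h8
  have hzw : z ⬝ᵥ w = 0 := by
    rw [hz, hgit uR, dotProduct_comm]
    exact hvu0
  have hw0 : w ≠ 0 := by
    intro hww0
    rw [hδv, hww0] at hδvpos
    simp [euclNorm] at hδvpos
  -- the matrix h
  refine ⟨1 + vecMulVec w z, ?_, ?_, ?_, ?_⟩
  · rw [det_one_add_vecMulVec', hzw, add_zero]
  · intro heq
    have hX0 : vecMulVec w z = 0 := by
      have := heq
      rwa [← sub_eq_zero, add_sub_cancel_left] at this
    obtain ⟨i, hi⟩ := Function.ne_iff.mp hw0
    have hj : ∃ j, z j ≠ 0 := Function.ne_iff.mp hz0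
    obtain ⟨j, hj⟩ := hj
    have : w i * z j = 0 := by
      have := congrFun (congrFun hX0 i) j
      simpa [vecMulVec_apply] using this
    exact (mul_ne_zero hi hj) this
  -- lattice invariance
  · have hact : ∀ m : Fin d → ℤ, (1 + vecMulVec w z).mulVec (g.mulVec (fun i => (m i : ℝ)))
        = g.mulVec (fun i => ((m + (u ⬝ᵥ m) • v) i : ℝ)) := by
      intro m
      have hzgm : z ⬝ᵥ (g.mulVec (fun i => (m i : ℝ))) = uR ⬝ᵥ (fun i => (m i : ℝ)) := by
        rw [hz, Matrix.dotProduct_mulVec, ← Matrix.mulVec_transpose, ← huRz]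
      have hcast : (fun i => ((m + (u ⬝ᵥ m) • v) i : ℝ))
          = (fun i => (m i : ℝ)) + (uR ⬝ᵥ (fun i => (m i : ℝ))) • vR := by
        funext i
        have : uR ⬝ᵥ (fun i => (m i : ℝ)) = ((u ⬝ᵥ m : ℤ) : ℝ) := by
          push_cast [dotProduct]
          rfl
        simp only [Pi.add_apply, Pi.smul_apply, this, smul_eq_mul]
        push_cast
        ring
      rw [Matrix.add_mulVec, Matrix.one_mulVec, vecMulVec_mulVec', hzgm, hcast,
        Matrix.mulVec_add, Matrix.mulVec_smul]
    ext x
    constructor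
    · rintro ⟨y, ⟨m, rfl⟩, rfl⟩
      exact ⟨m + (u ⬝ᵥ m) • v, hact m⟩
    · rintro ⟨m, rfl⟩
      refine ⟨g.mulVec (fun i => ((m - (u ⬝ᵥ m) • v) i : ℝ)),
        ⟨m - (u ⬝ᵥ m) • v, rfl⟩, ?_⟩
      have huv0 : u ⬝ᵥ v = 0 := by rw [← hk, hk0]
      have hdm : u ⬝ᵥ (m - (u ⬝ᵥ m) • v) = u ⬝ᵥ m := by
        rw [dotProduct_sub, dotProduct_smul, huv0, smul_eq_mul, mul_zero, sub_zero]
      have hmid : m - (u ⬝ᵥ m) • v + (u ⬝ᵥ (m - (u ⬝ᵥ m) • v)) • v = m := by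
        rw [hdm, sub_add_cancel]
      exact (hact (m - (u ⬝ᵥ m) • v)).trans (by rw [hmid])
  -- operator norm bound
  · have hop : opNorm (1 + vecMulVec w z - 1) ≤ δv * r := by
      have hmm : (1 + vecMulVec w z - 1 : Matrix (Fin d) (Fin d) ℝ) = vecMulVec w z :=
        add_sub_cancel_left 1 _
      rw [hmm, opNorm]
      apply Real.sSup_le
      · rintro a ⟨x, hx, rfl⟩
        simp only [Set.mem_setOf_eq] at hx
        show euclNorm (vecMulVec w z *ᵥ x) ≤ δv * r
        rw [vecMulVec_mulVec', euclNorm_smul]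
        calc |z ⬝ᵥ x| * euclNorm w ≤ (euclNorm z * euclNorm x) * euclNorm w := by
              apply mul_le_mul_of_nonneg_right (dot_le_euclNorm _ _) (euclNorm_nonneg _)
          _ ≤ (r * 1) * δv := by
              apply mul_le_mul_of_nonneg_right _ (euclNorm_nonneg _)
              exact mul_le_mul hzr hx (euclNorm_nonneg _) hrpos.le
          _ = δv * r := by ring
      · positivity
    refine hop.trans ?_
    have e3 : δv * r = K * δv ^ p := by
      rw [hr, ← hδvq]; ring
    rw [e3]
    have h2δ : δv ^ p ≤ (2 * δ) ^ p := Real.rpow_le_rpow hδvpos.le hδvlt.le hp0.le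
    have hmulp : (2 * δ) ^ p = 2 ^ p * δ ^ p := Real.mul_rpow (by norm_num) hδpos.le
    have h2p : (2 : ℝ) ^ p ≤ 4 := by
      have := Real.rpow_le_rpow_of_exponent_le (by norm_num : (1:ℝ) ≤ 2) hp2
      rwa [show ((2:ℝ) ^ (2:ℝ)) = 4 by
        rw [show (2:ℝ) = ((2:ℕ):ℝ) by norm_num, Real.rpow_natCast]; norm_num] at this
    have hδp : 0 < δ ^ p := Real.rpow_pos_of_pos hδpos _
    calc K * δv ^ p ≤ K * (2 ^ p * δ ^ p) := by
          apply mul_le_mul_of_nonneg_left (h2δ.trans_eq hmulp) hKpos.le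
      _ ≤ K * (4 * δ ^ p) := by
          apply mul_le_mul_of_nonneg_left (mul_le_mul_of_nonneg_right h2p hδp.le) hKpos.le
      _ = 4 * K * δ ^ p := by ring
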